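/- arXiv:1711.03034 — 8 statements merged into one kernel-verified Lean document; each statement's English description precedes it below -/
import Mathlib

section
/- Let n ≥ 1 be an integer, λ > 0 a real number, μ a real number, and t ≥ 0. Then ∫₀^t e^{-(μ + λ n) s} · e^{-μ (t-s)} (1 - e^{-λ (t-s)})^{n-1} ds = e^{-μ t} (1 - e^{-λ t})^n / (n λ). -/
open MeasureTheory

/-- Convolution inductive step:
`∫₀^t e^{-(μ + λ n) s} · e^{-μ (t-s)} (1 - e^{-λ (t-s)})^{n-1} ds
   = e^{-μ t} (1 - e^{-λ t})^n / (n λ)`. -/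
theorem convolution_exp_kernel_step
    (n : ℕ) (hn : 1 ≤ n) (l μ t : ℝ) (hl : 0 < l) (ht : 0 ≤ t) :
    ∫ s in (0 : ℝ)..t,
        Real.exp (-(μ + l * (n : ℝ)) * s) *
          (Real.exp (-μ * (t - s)) * (1 - Real.exp (-l * (t - s))) ^ (n - 1))
      = Real.exp (-μ * t) * (1 - Real.exp (-l * t)) ^ n / ((n : ℝ) * l) := by
  obtain ⟨m, rfl⟩ := Nat.exists_eq_add_of_le hn
  have hm1 : (1 + m : ℕ) - 1 = m := by omega
  have hNpos : (0:ℝ) < (1 + m : ℝ) := by positivity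
  have hNne : ((1:ℝ) + m) ≠ 0 := ne_of_gt hNpos
  set F : ℝ → ℝ := fun s =>
    (-(Real.exp (-μ * t)) / (((1:ℝ) + m) * l)) *
      (Real.exp (-l * s) - Real.exp (-l * t)) ^ (1 + m) with hF
  have hder : ∀ s ∈ Set.uIcc (0:ℝ) t, HasDerivAt F
      (Real.exp (-(μ + l * ((1 + m : ℕ) : ℝ)) * s) *
        (Real.exp (-μ * (t - s)) * (1 - Real.exp (-l * (t - s))) ^ ((1 + m) - 1))) s := by
    intro s _
    have hexp : HasDerivAt (fun s : ℝ => Real.exp (-l * s))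
        (Real.exp (-l * s) * (-l * 1)) s := ((hasDerivAt_id s).const_mul (-l)).exp
    have hpow := ((hexp.sub_const (Real.exp (-l * t))).pow (1 + m)).const_mul
      (-(Real.exp (-μ * t)) / (((1:ℝ) + m) * l))
    rw [hm1]
    convert hpow using 1
    · rfl
    · rfl
    · rfl
    rw [hm1]
    have e1 : Real.exp (-l * (t - s)) * Real.exp (-l * s) = Real.exp (-l * t) := by
      rw [← Real.exp_add]; ring_nf
    have e2 : (Real.exp (-l * s)) ^ m * (1 - Real.exp (-l * (t - s))) ^ m
        = (Real.exp (-l * s) - Real.exp (-l * t)) ^ m := by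
      rw [← mul_pow, mul_sub, mul_one, mul_comm (Real.exp (-l*s)), e1]
    have e3 : Real.exp (-(μ + l * ((1 + m : ℕ) : ℝ)) * s) * Real.exp (-μ * (t - s))
        = Real.exp (-μ * t) * Real.exp (-l * s) * (Real.exp (-l * s)) ^ m := by
      rw [← Real.exp_nat_mul, ← Real.exp_add, ← Real.exp_add, ← Real.exp_add]
      congr 1; push_cast; ring
    have key : Real.exp (-(μ + l * ((1 + m : ℕ) : ℝ)) * s) *
        (Real.exp (-μ * (t - s)) * (1 - Real.exp (-l * (t - s))) ^ m)
        = Real.exp (-μ * t) * Real.exp (-l * s) *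
          (Real.exp (-l * s) - Real.exp (-l * t)) ^ m := by
      rw [← e2, ← mul_assoc, e3]; ring
    rw [key]
    push_cast
    field_simp
  have hcont : Continuous (fun s : ℝ =>
      Real.exp (-(μ + l * ((1 + m : ℕ) : ℝ)) * s) *
        (Real.exp (-μ * (t - s)) * (1 - Real.exp (-l * (t - s))) ^ ((1 + m) - 1))) := by
    fun_prop
  rw [intervalIntegral.integral_eq_sub_of_hasDerivAt hder (hcont.intervalIntegrable 0 t)]
  have hl' : l ≠ 0 := ne_of_gt hl
  have hFt : F t = 0 := by
    simp [hF, sub_self, zero_pow (show 1 + m ≠ 0 by omega)]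
  have hF0 : F 0 = -(Real.exp (-μ * t)) / (((1:ℝ) + m) * l) * (1 - Real.exp (-l * t)) ^ (1 + m) := by
    simp [hF]
  rw [hFt, hF0]
  push_cast
  field_simp
  ring
end

section
/- Let d ≥ 1 be an integer and let λ > 0, μ, ζ, x₀ be real numbers. Define X_k(t) = ζ · C(d,k) · e^{-(μ + λ(d-k)) t} (1 - e^{-λ t})^k for 0 ≤ k ≤ d−1 (where C(d,k) is the binomial coefficient), and X_d(t) = e^{-μ t} ( ζ (1 - e^{-λ t})^d + x₀ ). Then for all t ∈ ℝ: X_0'(t) = -(μ + λ d) X_0(t); X_k'(t) = -(μ + λ(d-k)) X_k(t) + (d-k+1) λ X_{k-1}(t) for every 1 ≤ k ≤ d; and the initial conditions X_0(0) = ζ, X_k(0) = 0 for 1 ≤ k ≤ d−1, and X_d(0) = x₀ hold. -/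
lemma regen_aux (c a l : ℝ) (k : ℕ) (t : ℝ) :
    HasDerivAt (fun s : ℝ => c * Real.exp (a * s) * (1 - Real.exp (-l * s)) ^ k)
      (a * (c * Real.exp (a * t) * (1 - Real.exp (-l * t)) ^ k)
        + c * (k : ℝ) * l * Real.exp (-l * t) * Real.exp (a * t)
          * (1 - Real.exp (-l * t)) ^ (k - 1)) t := by
  have h1 : HasDerivAt (fun s : ℝ => Real.exp (a * s)) (Real.exp (a * t) * a) t :=
    by simpa using ((hasDerivAt_id t).const_mul a).exp
  have h2 : HasDerivAt (fun s : ℝ => 1 - Real.exp (-l * s))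
      (-(Real.exp (-l * t) * (-l))) t :=
    by simpa using (((hasDerivAt_id t).const_mul (-l)).exp).const_sub 1
  have h4 := (h1.const_mul c).fun_mul (h2.fun_pow k)
  refine h4.congr_deriv ?_
  symm
  ring

/-- The closed-form functions
`X_k(t) = ζ C(d,k) e^{-(μ+λ(d-k))t}(1-e^{-λ t})^k` for `0 ≤ k ≤ d-1` and
`X_d(t) = e^{-μ t}(ζ(1-e^{-λ t})^d + x₀)` solve the homogeneous regeneration ODE
system (null control) with initial conditions `X_0(0)=ζ`, `X_k(0)=0` for
`1 ≤ k ≤ d-1` and `X_d(0)=x₀`. -/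
theorem regeneration_closed_form_null_control
    (d : ℕ) (hd : 1 ≤ d) (l μ ζ x₀ : ℝ) (hl : 0 < l)
    (X : ℕ → ℝ → ℝ)
    (hXk : ∀ k, k ≤ d - 1 → ∀ t : ℝ,
      X k t = ζ * (d.choose k : ℝ) * Real.exp (-(μ + l * ((d - k : ℕ) : ℝ)) * t) *
        (1 - Real.exp (-l * t)) ^ k)
    (hXd : ∀ t : ℝ,
      X d t = Real.exp (-μ * t) * (ζ * (1 - Real.exp (-l * t)) ^ d + x₀)) :
    (∀ t : ℝ, HasDerivAt (X 0) (-(μ + l * (d : ℝ)) * X 0 t) t) ∧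
    (∀ k, 1 ≤ k → k ≤ d → ∀ t : ℝ,
      HasDerivAt (X k)
        (-(μ + l * ((d - k : ℕ) : ℝ)) * X k t + (((d - k : ℕ) : ℝ) + 1) * l * X (k - 1) t) t) ∧
    X 0 0 = ζ ∧ (∀ k, 1 ≤ k → k ≤ d - 1 → X k 0 = 0) ∧ X d 0 = x₀ := by
  have h0le : (0 : ℕ) ≤ d - 1 := Nat.zero_le _
  refine ⟨?_, ?_, ?_, ?_, ?_⟩
  · -- X 0
    intro t
    have h := regen_aux (ζ * (d.choose 0 : ℝ)) (-(μ + l * ((d - 0 : ℕ) : ℝ))) l 0 t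
    have hD : HasDerivAt (X 0)
        (-(μ + l * ((d - 0 : ℕ) : ℝ)) * (ζ * (d.choose 0 : ℝ) *
          Real.exp (-(μ + l * ((d - 0 : ℕ) : ℝ)) * t) * (1 - Real.exp (-l * t)) ^ 0)
          + ζ * (d.choose 0 : ℝ) * ((0 : ℕ) : ℝ) * l * Real.exp (-l * t) *
            Real.exp (-(μ + l * ((d - 0 : ℕ) : ℝ)) * t) * (1 - Real.exp (-l * t)) ^ (0 - 1)) t :=
      h.congr_of_eventuallyEq (Filter.Eventually.of_forall (hXk 0 h0le))
    refine hD.congr_deriv ?_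
    symm
    rw [hXk 0 h0le t, Nat.sub_zero]
    push_cast
    ring
  · -- general k
    intro k hk1 hkd t
    rcases eq_or_lt_of_le hkd with hkD | hkD
    · -- k = d
      have h1 : HasDerivAt (fun s : ℝ => Real.exp (-μ * s)) (Real.exp (-μ * t) * (-μ)) t :=
        by simpa using ((hasDerivAt_id t).const_mul (-μ)).exp
      have h2 : HasDerivAt (fun s : ℝ => 1 - Real.exp (-l * s))
          (-(Real.exp (-l * t) * (-l))) t :=
        by simpa using (((hasDerivAt_id t).const_mul (-l)).exp).const_sub 1
      have h4 := h1.fun_mul (((h2.fun_pow d).const_mul ζ).add_const x₀)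
      rw [hkD]
      have hD := h4.congr_of_eventuallyEq (Filter.Eventually.of_forall hXd)
      refine hD.congr_deriv ?_
      symm
      have hkm : d - 1 ≤ d - 1 := le_refl _
      rw [hXd t, hXk (d - 1) hkm t, Nat.sub_self]
      have hc1 : (d.choose (d - 1) : ℝ) = (d : ℝ) := by
        rw [Nat.choose_symm hd, Nat.choose_one_right]
      have hcast2 : ((d - (d - 1) : ℕ) : ℝ) = 1 := by
        have : d - (d - 1) = 1 := by omega
        rw [this]; norm_num
      rw [hcast2, hc1]
      have hexp : Real.exp (-(μ + l * 1) * t) = Real.exp (-μ * t) * Real.exp (-l * t) := by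
        rw [← Real.exp_add]; ring_nf
      rw [hexp]
      push_cast
      ring
    · -- k < d
      have hkd1 : k ≤ d - 1 := by omega
      have hkm1 : k - 1 ≤ d - 1 := by omega
      have h := regen_aux (ζ * (d.choose k : ℝ)) (-(μ + l * ((d - k : ℕ) : ℝ))) l k t
      have hD := h.congr_of_eventuallyEq (Filter.Eventually.of_forall (hXk k hkd1))
      refine hD.congr_deriv ?_
      symm
      rw [hXk k hkd1 t, hXk (k - 1) hkm1 t]
      have hbin : (d.choose k : ℝ) * (k : ℝ)
          = (d.choose (k - 1) : ℝ) * (((d - k : ℕ) : ℝ) + 1) := by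
        have hb : d.choose k * k = d.choose (k - 1) * (d - k + 1) := by
          obtain ⟨j, hj⟩ : ∃ j, k = j + 1 := ⟨k - 1, by omega⟩
          subst hj
          simp only [Nat.add_sub_cancel]
          have h2 : d.choose (j + 1) * (j + 1) = d.choose j * (d - j) :=
            Nat.choose_succ_right_eq d j
          have h3 : d - j = d - (j + 1) + 1 := by omega
          rw [← h3]
          simpa [Nat.add_comm] using h2
        exact_mod_cast hb
      have hexp : Real.exp (-(μ + l * ((d - (k - 1) : ℕ) : ℝ)) * t)
          = Real.exp (-l * t) * Real.exp (-(μ + l * ((d - k : ℕ) : ℝ)) * t) := by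
        rw [← Real.exp_add]
        congr 1
        have c1 : ((d - (k - 1) : ℕ) : ℝ) = (d : ℝ) - (k : ℝ) + 1 := by
          have : d - (k - 1) = d - k + 1 := by omega
          rw [this]
          push_cast [Nat.cast_sub hkd]
          ring
        have c2 : ((d - k : ℕ) : ℝ) = (d : ℝ) - (k : ℝ) := Nat.cast_sub hkd
        rw [c1, c2]
        ring
      rw [hexp]
      linear_combination (-ζ * l * Real.exp (-l * t) *
        Real.exp (-(μ + l * ((d - k : ℕ) : ℝ)) * t) *
        (1 - Real.exp (-l * t)) ^ (k - 1)) * hbin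
  · simpa using hXk 0 h0le 0
  · intro k hk1 hkd1
    rw [hXk k hkd1 0]
    norm_num [zero_pow (show k ≠ 0 by omega)]
  · rw [hXd 0]
    norm_num [zero_pow (show d ≠ 0 by omega)]
end

section
/- Let d ≥ 1 be an integer and let λ > 0, μ, ζ, x₀ be real numbers. Define h_k(s) = C(d,k) e^{-(μ + λ(d-k)) s} (1 - e^{-λ s})^k for 0 ≤ k ≤ d, X_k(t) = ζ ∫₀^t h_k(s) ds for 0 ≤ k ≤ d−1, and X_d(t) = e^{-μ t} x₀ + ζ ∫₀^t e^{-μ s} (1 - e^{-λ s})^d ds. Then for all t ≥ 0: X_0'(t) = -(μ + λ d) X_0(t) + ζ; X_k'(t) = -(μ + λ(d-k)) X_k(t) + (d-k+1) λ X_{k-1}(t) for every 1 ≤ k ≤ d; and X_k(0) = 0 for 0 ≤ k ≤ d−1 while X_d(0) = x₀. -/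
open MeasureTheory


noncomputable def hfun (d k : ℕ) (l μ : ℝ) : ℝ → ℝ :=
  fun s => (d.choose k : ℝ) * Real.exp (-(μ + l * ((d - k : ℕ) : ℝ)) * s) *
    (1 - Real.exp (-l * s)) ^ k

lemma hfun_cont (d k : ℕ) (l μ : ℝ) : Continuous (hfun d k l μ) := by
  unfold hfun; fun_prop

lemma expDeriv (c : ℝ) (s : ℝ) :
    HasDerivAt (fun x : ℝ => Real.exp (c * x)) (c * Real.exp (c * s)) s := by
  simpa [mul_comm] using ((hasDerivAt_id s).const_mul c).exp

lemma hfun_hasDerivAt (d k : ℕ) (hk1 : 1 ≤ k) (hkd : k ≤ d) (l μ : ℝ) (s : ℝ) :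
    HasDerivAt (hfun d k l μ)
      (-(μ + l * ((d - k : ℕ) : ℝ)) * hfun d k l μ s
        + (((d - k : ℕ) : ℝ) + 1) * l * hfun d (k - 1) l μ s) s := by
  have hg : HasDerivAt (fun x : ℝ => (1 - Real.exp (-l * x)) ^ k)
      ((k : ℝ) * (1 - Real.exp (-l * s)) ^ (k - 1) * (-(-l * Real.exp (-l * s)))) s :=
    ((expDeriv (-l) s).const_sub 1).pow k
  have hE := expDeriv (-(μ + l * ((d - k : ℕ) : ℝ))) s
  have hprod := ((hE.mul hg).const_mul (d.choose k : ℝ))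
  convert hprod using 1
  · rfl
  · rfl
  · funext y; simp [hfun, mul_assoc]
  have hnat : (d - (k - 1) : ℕ) = (d - k) + 1 := by omega
  have hch : (d.choose k : ℝ) * k = (d.choose (k - 1) : ℝ) * (((d - k : ℕ) : ℝ) + 1) := by
    have := Nat.choose_succ_right_eq d (k - 1)
    have hk : (k - 1) + 1 = k := by omega
    rw [hk] at this
    have hdk : d - (k - 1) = (d - k) + 1 := by omega
    rw [hdk] at this
    exact_mod_cast congrArg (Nat.cast (R := ℝ)) this
  have hexp : Real.exp (-(μ + l * ((d - (k - 1) : ℕ) : ℝ)) * s)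
      = Real.exp (-(μ + l * ((d - k : ℕ) : ℝ)) * s) * Real.exp (-l * s) := by
    rw [← Real.exp_add, hnat]; push_cast; ring_nf
  have hpow : (1 - Real.exp (-l * s)) ^ k
      = (1 - Real.exp (-l * s)) ^ (k - 1) * (1 - Real.exp (-l * s)) := by
    conv_lhs => rw [show k = (k - 1) + 1 by omega]
    rw [pow_succ]
  unfold hfun
  rw [hexp, hpow]
  linear_combination (-(l) * Real.exp (-(μ + l * ((d - k : ℕ) : ℝ)) * s) * Real.exp (-l * s) *
    (1 - Real.exp (-l * s)) ^ (k - 1)) * hch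

lemma hfun_hasDerivAt0 (d : ℕ) (l μ : ℝ) (s : ℝ) :
    HasDerivAt (hfun d 0 l μ) (-(μ + l * ((d - 0 : ℕ) : ℝ)) * hfun d 0 l μ s) s := by
  have hE := expDeriv (-(μ + l * ((d - 0 : ℕ) : ℝ))) s
  convert hE.const_mul ((d.choose 0 : ℕ) : ℝ) using 1
  · rfl
  · rfl
  · funext y; simp [hfun]
  · simp [hfun]

lemma intDeriv (f : ℝ → ℝ) (hf : Continuous f) (t : ℝ) :
    HasDerivAt (fun u => ∫ s in (0:ℝ)..u, f s) (f t) t :=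
  intervalIntegral.integral_hasDerivAt_right (hf.intervalIntegrable _ _)
    (hf.stronglyMeasurableAtFilter _ _) hf.continuousAt

lemma key_pos (d k : ℕ) (hk1 : 1 ≤ k) (hkd : k ≤ d) (l μ : ℝ) (t : ℝ) :
    hfun d k l μ t = -(μ + l * ((d - k : ℕ) : ℝ)) * (∫ s in (0:ℝ)..t, hfun d k l μ s)
      + (((d - k : ℕ) : ℝ) + 1) * l * ∫ s in (0:ℝ)..t, hfun d (k - 1) l μ s := by
  have h0 : hfun d k l μ 0 = 0 := by
    simp [hfun, zero_pow (by omega : k ≠ 0)]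
  have hcont : Continuous (fun s => -(μ + l * ((d - k : ℕ) : ℝ)) * hfun d k l μ s
      + (((d - k : ℕ) : ℝ) + 1) * l * hfun d (k - 1) l μ s) := by
    have := hfun_cont d k l μ; have := hfun_cont d (k-1) l μ; fun_prop
  have hint := intervalIntegral.integral_eq_sub_of_hasDerivAt
    (f := hfun d k l μ) (a := 0) (b := t)
    (fun s _ => hfun_hasDerivAt d k hk1 hkd l μ s)
    (hcont.intervalIntegrable 0 t)
  rw [h0, sub_zero] at hint
  rw [intervalIntegral.integral_add
      (f := fun s => -(μ + l * ((d - k : ℕ) : ℝ)) * hfun d k l μ s)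
      (g := fun s => (((d - k : ℕ) : ℝ) + 1) * l * hfun d (k - 1) l μ s)
      ((continuous_const.mul (hfun_cont d k l μ)).intervalIntegrable 0 t)
      ((continuous_const.mul (hfun_cont d (k-1) l μ)).intervalIntegrable 0 t),
    intervalIntegral.integral_const_mul, intervalIntegral.integral_const_mul] at hint
  linarith [hint]

lemma key_zero (d : ℕ) (l μ : ℝ) (t : ℝ) :
    hfun d 0 l μ t = 1 + -(μ + l * ((d - 0 : ℕ) : ℝ)) * ∫ s in (0:ℝ)..t, hfun d 0 l μ s := by
  have h0 : hfun d 0 l μ 0 = 1 := by simp [hfun]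
  have hint := intervalIntegral.integral_eq_sub_of_hasDerivAt
    (f := hfun d 0 l μ) (a := 0) (b := t)
    (fun s _ => hfun_hasDerivAt0 d l μ s)
    ((continuous_const.mul (hfun_cont d 0 l μ)).intervalIntegrable 0 t)
  rw [h0, intervalIntegral.integral_const_mul] at hint
  linarith [hint]

/-- Exact solution of the regeneration ODE system under the maximal activation
control `u ≡ 1`, with `X_k(0) = 0` for `k ≤ d-1` and `X_d(0) = x₀`. -/
theorem regeneration_closed_form_full_control
    (d : ℕ) (hd : 1 ≤ d) (l μ ζ x₀ : ℝ) (hl : 0 < l)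
    (h : ℕ → ℝ → ℝ)
    (hh : ∀ k, k ≤ d → ∀ s : ℝ,
      h k s = (d.choose k : ℝ) * Real.exp (-(μ + l * ((d - k : ℕ) : ℝ)) * s) *
        (1 - Real.exp (-l * s)) ^ k)
    (X : ℕ → ℝ → ℝ)
    (hXk : ∀ k, k ≤ d - 1 → ∀ t : ℝ, X k t = ζ * ∫ s in (0 : ℝ)..t, h k s)
    (hXd : ∀ t : ℝ,
      X d t = Real.exp (-μ * t) * x₀ +
        ζ * ∫ s in (0 : ℝ)..t, Real.exp (-μ * s) * (1 - Real.exp (-l * s)) ^ d) :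
    (∀ t : ℝ, 0 ≤ t → HasDerivAt (X 0) (-(μ + l * (d : ℝ)) * X 0 t + ζ) t) ∧
    (∀ k, 1 ≤ k → k ≤ d → ∀ t : ℝ, 0 ≤ t →
      HasDerivAt (X k)
        (-(μ + l * ((d - k : ℕ) : ℝ)) * X k t + (((d - k : ℕ) : ℝ) + 1) * l * X (k - 1) t) t) ∧
    (∀ k, k ≤ d - 1 → X k 0 = 0) ∧ X d 0 = x₀ := by
  have hEq : ∀ k, k ≤ d → h k = hfun d k l μ := fun k hk => funext fun s => by
    rw [hh k hk s]; rfl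
  have hXfun : ∀ k, k ≤ d - 1 → X k = fun t => ζ * ∫ s in (0:ℝ)..t, hfun d k l μ s := by
    intro k hk; funext t; rw [hXk k hk t, hEq k (by omega)]
  have hdd : ∀ s : ℝ, Real.exp (-μ * s) * (1 - Real.exp (-l * s)) ^ d = hfun d d l μ s := by
    intro s; simp [hfun]
  have hXdfun : X d = fun t => Real.exp (-μ * t) * x₀ +
      ζ * ∫ s in (0:ℝ)..t, hfun d d l μ s := by
    funext t; rw [hXd t]; simp only [hdd]
  refine ⟨?_, ?_, ?_, ?_⟩
  · intro t ht
    have hX0 := hXfun 0 (by omega)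
    have hD : HasDerivAt (X 0) (ζ * hfun d 0 l μ t) t := by
      rw [hX0]; exact (intDeriv _ (hfun_cont d 0 l μ) t).const_mul ζ
    have hkey := key_zero d l μ t
    simp only [Nat.sub_zero] at hkey
    have heq : ζ * hfun d 0 l μ t = -(μ + l * (d : ℝ)) * X 0 t + ζ := by
      simp only [hX0]
      linear_combination ζ * hkey
    rwa [heq] at hD
  · intro k hk1 hkd t ht
    have hXkm := hXfun (k - 1) (by omega)
    have hkey := key_pos d k hk1 hkd l μ t
    by_cases hcase : k ≤ d - 1
    · have hXke := hXfun k hcase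
      have hD : HasDerivAt (X k) (ζ * hfun d k l μ t) t := by
        rw [hXke]; exact (intDeriv _ (hfun_cont d k l μ) t).const_mul ζ
      have heq : ζ * hfun d k l μ t = -(μ + l * ((d - k : ℕ) : ℝ)) * X k t
          + (((d - k : ℕ) : ℝ) + 1) * l * X (k - 1) t := by
        simp only [hXke, hXkm]
        linear_combination ζ * hkey
      rwa [heq] at hD
    · have hkd' : k = d := by omega
      subst hkd'
      have hD : HasDerivAt (X k)
          (-μ * Real.exp (-μ * t) * x₀ + ζ * hfun k k l μ t) t := by
        rw [hXdfun]
        exact ((expDeriv (-μ) t).mul_const x₀).add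
          ((intDeriv _ (hfun_cont k k l μ) t).const_mul ζ)
      have heq : -μ * Real.exp (-μ * t) * x₀ + ζ * hfun k k l μ t
          = -(μ + l * ((k - k : ℕ) : ℝ)) * X k t
            + (((k - k : ℕ) : ℝ) + 1) * l * X (k - 1) t := by
        simp only [hXdfun, hXkm]
        simp only [Nat.sub_self, Nat.cast_zero, mul_zero, add_zero] at hkey ⊢
        linear_combination ζ * hkey
      rwa [heq] at hD
  · intro k hk; rw [hXk k hk 0]; simp
  · rw [hXd 0]; simp
end

section
/- Let d ≥ 1 be an integer and λ > 0, μ > 0, γ > 0, c₁ > 0 real numbers. Define φ : (0,1) → ℝ by φ(z) = γ (1 - z)^d z^{μ/λ}, and set z* = μ/(μ + dλ). Then φ is strictly increasing on (0, z*], strictly decreasing on [z*, 1), and if φ(z*) > c₁ there exist unique z_on ∈ (0, z*) and z_off ∈ (z*, 1) with φ(z_on) = φ(z_off) = c₁, and moreover { z ∈ (0,1) : φ(z) > c₁ } = (z_on, z_off). -/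
open Set Real

/-- Structure of the switching equation `φ(z) = c₁` with
`φ(z) = γ(1-z)^d z^{μ/λ}` on `(0,1)`: `φ` increases up to `z* = μ/(μ+dλ)`,
decreases afterwards, and if `φ(z*) > c₁` there are exactly two solutions
`z_on ∈ (0,z*)`, `z_off ∈ (z*,1)`, and `{z ∈ (0,1) : φ(z) > c₁} = (z_on, z_off)`. -/
theorem switching_equation_two_solutions
    (d : ℕ) (hd : 1 ≤ d) (l μ γ c₁ : ℝ)
    (hl : 0 < l) (hμ : 0 < μ) (hγ : 0 < γ) (hc₁ : 0 < c₁)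
    (φ : ℝ → ℝ) (hφ : ∀ z : ℝ, φ z = γ * (1 - z) ^ d * z ^ (μ / l))
    (zstar : ℝ) (hz : zstar = μ / (μ + (d : ℝ) * l)) :
    StrictMonoOn φ (Set.Ioc 0 zstar) ∧
    StrictAntiOn φ (Set.Ico zstar 1) ∧
    (c₁ < φ zstar →
      ∃ zon zoff : ℝ,
        zon ∈ Set.Ioo 0 zstar ∧ zoff ∈ Set.Ioo zstar 1 ∧
        φ zon = c₁ ∧ φ zoff = c₁ ∧
        (∀ z ∈ Set.Ioo 0 zstar, φ z = c₁ → z = zon) ∧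
        (∀ z ∈ Set.Ioo zstar 1, φ z = c₁ → z = zoff) ∧
        {z ∈ Set.Ioo (0 : ℝ) 1 | c₁ < φ z} = Set.Ioo zon zoff) := by
  obtain rfl : φ = fun z : ℝ => γ * (1 - z) ^ d * z ^ (μ / l) := funext hφ
  set α := μ / l with hα_def
  have hα : 0 < α := div_pos hμ hl
  have hdl : 0 < (d : ℝ) * l := by positivity
  have hz0 : 0 < zstar := by rw [hz]; positivity
  have hz1 : zstar < 1 := by
    rw [hz, div_lt_one (by linarith)]; linarith
  have hzstar_eq : zstar = α / (α + d) := by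
    rw [hz, hα_def]
    rw [div_eq_div_iff (by linarith) (by positivity)]
    field_simp
  have hαd : (0:ℝ) < α + d := by positivity
  -- continuity
  have hcont : Continuous (fun z : ℝ => γ * (1 - z) ^ d * z ^ α) := by
    exact ((continuous_const.mul ((continuous_const.sub continuous_id).pow d)).mul
      (Real.continuous_rpow_const hα.le))
  -- derivative
  have hderiv : ∀ z : ℝ, 0 < z → z < 1 →
      HasDerivAt (fun z : ℝ => γ * (1 - z) ^ d * z ^ α)
        (γ * ((1 - z) ^ (d - 1) * z ^ (α - 1)) * (α * (1 - z) - d * z)) z := by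
    intro z hz0' hz1'
    have h1 : HasDerivAt (fun z : ℝ => 1 - z) (-1) z := by
      simpa using (hasDerivAt_id z).const_sub 1
    have h2 : HasDerivAt (fun z : ℝ => (1 - z) ^ d) ((d : ℝ) * (1 - z) ^ (d - 1) * (-1)) z :=
      (hasDerivAt_pow d (1 - z)).comp z h1
    have h3 : HasDerivAt (fun z : ℝ => z ^ α) (α * z ^ (α - 1)) z :=
      Real.hasDerivAt_rpow_const (Or.inl hz0'.ne')
    have h4 := (h2.const_mul γ).mul h3
    refine HasDerivAt.congr_deriv h4 ?_
    have e1 : z ^ α = z ^ (α - 1) * z := by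
      rw [← Real.rpow_add_one hz0'.ne' (α - 1)]; norm_num
    have e2 : (1 - z) ^ d = (1 - z) ^ (d - 1) * (1 - z) := by
      rw [← pow_succ]; congr 1; omega
    rw [e1, e2]; ring
  -- sign of the derivative
  have hmono : StrictMonoOn (fun z : ℝ => γ * (1 - z) ^ d * z ^ α) (Set.Ioc 0 zstar) := by
    apply strictMonoOn_of_deriv_pos (convex_Ioc 0 zstar) (hcont.continuousOn)
    intro x hx
    rw [interior_Ioc] at hx
    have hx0 : 0 < x := hx.1
    have hx1 : x < 1 := hx.2.trans hz1
    rw [(hderiv x hx0 hx1).deriv]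
    have hfac : 0 < α * (1 - x) - d * x := by
      have : x * (α + d) < α := by
        have := hx.2
        rw [hzstar_eq, lt_div_iff₀ hαd] at this
        exact this
      nlinarith
    have hp1 : 0 < (1 - x) ^ (d - 1) := pow_pos (by linarith) _
    have hp2 : 0 < x ^ (α - 1) := Real.rpow_pos_of_pos hx0 _
    positivity
  have hanti : StrictAntiOn (fun z : ℝ => γ * (1 - z) ^ d * z ^ α) (Set.Ico zstar 1) := by
    apply strictAntiOn_of_deriv_neg (convex_Ico zstar 1) (hcont.continuousOn)
    intro x hx
    rw [interior_Ico] at hx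
    have hx0 : 0 < x := hz0.trans hx.1
    have hx1 : x < 1 := hx.2
    rw [(hderiv x hx0 hx1).deriv]
    have hfac : α * (1 - x) - d * x < 0 := by
      have : α < x * (α + d) := by
        have := hx.1
        rw [hzstar_eq, div_lt_iff₀ hαd] at this
        exact this
      nlinarith
    have hp1 : 0 < (1 - x) ^ (d - 1) := pow_pos (by linarith) _
    have hp2 : 0 < x ^ (α - 1) := Real.rpow_pos_of_pos hx0 _
    have hpos : 0 < γ * ((1 - x) ^ (d - 1) * x ^ (α - 1)) := by positivity
    exact mul_neg_of_pos_of_neg hpos hfac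
  refine ⟨hmono, hanti, fun hcstar => ?_⟩
  have hφ0 : (fun z : ℝ => γ * (1 - z) ^ d * z ^ α) 0 = 0 := by
    simp [Real.zero_rpow hα.ne']
  have hφ1 : (fun z : ℝ => γ * (1 - z) ^ d * z ^ α) 1 = 0 := by
    simp [zero_pow (by omega : d ≠ 0)]
  -- existence of zon
  obtain ⟨zon, hzon_mem, hzon_eq⟩ :
      ∃ zon ∈ Set.Ioo (0:ℝ) zstar, (fun z : ℝ => γ * (1 - z) ^ d * z ^ α) zon = c₁ := by
    have := intermediate_value_Ioo hz0.le hcont.continuousOn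
    have hmem : c₁ ∈ Set.Ioo ((fun z : ℝ => γ * (1 - z) ^ d * z ^ α) 0)
        ((fun z : ℝ => γ * (1 - z) ^ d * z ^ α) zstar) := by
      rw [hφ0]; exact ⟨hc₁, hcstar⟩
    obtain ⟨zon, h1, h2⟩ := this hmem
    exact ⟨zon, h1, h2⟩
  obtain ⟨zoff, hzoff_mem, hzoff_eq⟩ :
      ∃ zoff ∈ Set.Ioo zstar (1:ℝ), (fun z : ℝ => γ * (1 - z) ^ d * z ^ α) zoff = c₁ := by
    have := intermediate_value_Ioo' hz1.le hcont.continuousOn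
    have hmem : c₁ ∈ Set.Ioo ((fun z : ℝ => γ * (1 - z) ^ d * z ^ α) 1)
        ((fun z : ℝ => γ * (1 - z) ^ d * z ^ α) zstar) := by
      rw [hφ1]; exact ⟨hc₁, hcstar⟩
    obtain ⟨zoff, h1, h2⟩ := this hmem
    exact ⟨zoff, h1, h2⟩
  have hsubIoc : Set.Ioo (0:ℝ) zstar ⊆ Set.Ioc 0 zstar := Set.Ioo_subset_Ioc_self
  have hsubIco : Set.Ioo zstar (1:ℝ) ⊆ Set.Ico zstar 1 := Set.Ioo_subset_Ico_self
  refine ⟨zon, zoff, hzon_mem, hzoff_mem, hzon_eq, hzoff_eq, ?_, ?_, ?_⟩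
  · intro z hzmem hzeq
    exact hmono.injOn (hsubIoc hzmem) (hsubIoc hzon_mem) (hzeq.trans hzon_eq.symm)
  · intro z hzmem hzeq
    exact hanti.injOn (hsubIco hzmem) (hsubIco hzoff_mem) (hzeq.trans hzoff_eq.symm)
  · ext z
    simp only [Set.mem_setOf_eq, Set.mem_Ioo]
    constructor
    · rintro ⟨⟨hz0', hz1'⟩, hcz⟩
      constructor
      · by_contra h
        push_neg at h
        have hzle : z ≤ zstar := h.trans hzon_mem.2.le
        have h3 : γ * (1 - zon) ^ d * zon ^ α = c₁ := hzon_eq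
        rcases eq_or_lt_of_le h with rfl | hlt
        · linarith
        · have h2 : γ * (1 - z) ^ d * z ^ α < γ * (1 - zon) ^ d * zon ^ α :=
            hmono ⟨hz0', hzle⟩ (hsubIoc hzon_mem) hlt
          linarith
      · by_contra h
        push_neg at h
        have hzge : zstar ≤ z := hzoff_mem.1.le.trans h
        have h3 : γ * (1 - zoff) ^ d * zoff ^ α = c₁ := hzoff_eq
        rcases eq_or_lt_of_le h with rfl | hlt
        · linarith
        · have h2 : γ * (1 - z) ^ d * z ^ α < γ * (1 - zoff) ^ d * zoff ^ α :=
            hanti (hsubIco hzoff_mem) ⟨hzge, hz1'⟩ hlt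
          linarith
    · rintro ⟨h1, h2⟩
      have hz0' : 0 < z := hzon_mem.1.trans h1
      have hz1' : z < 1 := h2.trans hzoff_mem.2
      refine ⟨⟨hz0', hz1'⟩, ?_⟩
      rcases le_or_gt z zstar with hle | hlt
      · have h3 : γ * (1 - zon) ^ d * zon ^ α = c₁ := hzon_eq
        have h4 : γ * (1 - zon) ^ d * zon ^ α < γ * (1 - z) ^ d * z ^ α :=
          hmono (hsubIoc hzon_mem) ⟨hz0', hle⟩ h1
        linarith
      · have h3 : γ * (1 - zoff) ^ d * zoff ^ α = c₁ := hzoff_eq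
        have h4 : γ * (1 - zoff) ^ d * zoff ^ α < γ * (1 - z) ^ d * z ^ α :=
          hanti ⟨hlt.le, hz1'⟩ (hsubIco hzoff_mem) h2
        linarith
end

section
/- Let d ≥ 1 be an integer and λ > 0, μ > 0, γ > 0, c₁ > 0, T > 0 real numbers, and define p̄₀(t) = -γ (1 - e^{-λ(T-t)})^d e^{-μ(T-t)} for t ≤ T. Then: (a) for every t < T, p̄₀(t) < -c₁ if and only if z := e^{-λ(T-t)} satisfies γ(1-z)^d z^{μ/λ} > c₁; (b) the set S = { t ≤ T : p̄₀(t) < -c₁ } is either empty or an open interval (t_on, t_off) with t_off < T, where t_on = T + (1/λ) ln z_on and t_off = T + (1/λ) ln z_off for the two solutions z_on < z_off in (0,1) of γ(1-z)^d z^{μ/λ} = c₁; (c) 0 ∈ S if and only if μ T < d · ln( (γ/c₁)^{1/d} (1 - e^{-λ T}) ). -/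
open Real Set


/-- Structure of the activation set in the pure-activation-cost case:
with `p̄₀(t) = -γ(1-e^{-λ(T-t)})^d e^{-μ(T-t)}`,
(a) for `t < T`, `p̄₀(t) < -c₁` iff `z = e^{-λ(T-t)}` satisfies `γ(1-z)^d z^{μ/λ} > c₁`;
(b) the set `S = {t ≤ T : p̄₀(t) < -c₁}` is empty or an open interval
`(T + (1/λ) ln z_on, T + (1/λ) ln z_off)` with right endpoint `< T`, for the two
solutions `z_on < z_off` in `(0,1)` of `γ(1-z)^d z^{μ/λ} = c₁`;
(c) `0 ∈ S` iff `μ T < d ln((γ/c₁)^{1/d}(1-e^{-λ T}))`. -/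
theorem pure_activation_threshold_structure
    (d : ℕ) (hd : 1 ≤ d) (l μ γ c₁ T : ℝ)
    (hl : 0 < l) (hμ : 0 < μ) (hγ : 0 < γ) (hc₁ : 0 < c₁) (hT : 0 < T)
    (p₀ : ℝ → ℝ)
    (hp : ∀ t : ℝ, p₀ t = -γ * (1 - Real.exp (-l * (T - t))) ^ d * Real.exp (-μ * (T - t)))
    (S : Set ℝ) (hS : S = {t : ℝ | t ≤ T ∧ p₀ t < -c₁}) :
    (∀ t : ℝ, t < T →
      (p₀ t < -c₁ ↔
        c₁ < γ * (1 - Real.exp (-l * (T - t))) ^ d * Real.exp (-l * (T - t)) ^ (μ / l))) ∧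
    (S = ∅ ∨
      ∃ zon zoff : ℝ,
        zon ∈ Set.Ioo (0 : ℝ) 1 ∧ zoff ∈ Set.Ioo (0 : ℝ) 1 ∧ zon < zoff ∧
        γ * (1 - zon) ^ d * zon ^ (μ / l) = c₁ ∧
        γ * (1 - zoff) ^ d * zoff ^ (μ / l) = c₁ ∧
        T + (1 / l) * Real.log zoff < T ∧
        S = Set.Ioo (T + (1 / l) * Real.log zon) (T + (1 / l) * Real.log zoff)) ∧
    ((0 : ℝ) ∈ S ↔
      μ * T < (d : ℝ) * Real.log ((γ / c₁) ^ (1 / (d : ℝ)) * (1 - Real.exp (-l * T)))) := by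
  have hμl : 0 < μ / l := div_pos hμ hl
  set f : ℝ → ℝ := fun z => γ * (1 - z) ^ d * z ^ (μ / l) with hf
  have hrw : ∀ t : ℝ, p₀ t = -f (Real.exp (-l * (T - t))) := by
    intro t
    have hz : Real.exp (-l * (T - t)) ^ (μ / l) = Real.exp (-μ * (T - t)) := by
      rw [Real.rpow_def_of_pos (Real.exp_pos _), Real.log_exp]
      congr 1
      field_simp
    simp only [hf]
    rw [hp t, hz]
    ring
  have claimA : ∀ t : ℝ, p₀ t < -c₁ ↔ c₁ < f (Real.exp (-l * (T - t))) := by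
    intro t
    rw [hrw t]
    constructor <;> intro h <;> linarith
  have hfpos : ∀ z ∈ Ioo (0:ℝ) 1, 0 < f z := by
    intro z hz
    have h1 : 0 < 1 - z := by linarith [hz.2]
    have h2 : (0:ℝ) < z := hz.1
    simp only [hf]
    positivity
  have hlogf : ∀ z ∈ Ioo (0:ℝ) 1, Real.log (f z) =
      Real.log γ + ((d : ℝ) * Real.log (1 - z) + (μ / l) * Real.log z) := by
    intro z hz
    have h1 : 0 < 1 - z := by linarith [hz.2]
    have h2 : (0:ℝ) < z := hz.1
    simp only [hf]
    rw [Real.log_mul (by positivity) (by positivity),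
        Real.log_mul (by positivity) (by positivity),
        Real.log_pow, Real.log_rpow h2]
    ring
  have hf0 : f 0 = 0 := by
    simp [hf, Real.zero_rpow hμl.ne']
  have hf1 : f 1 = 0 := by
    have h0 : (1:ℝ) - 1 = 0 := by ring
    simp [hf, h0, zero_pow (show d ≠ 0 by omega)]
  have hrc : Continuous fun z : ℝ => z ^ (μ / l) :=
    continuous_iff_continuousAt.2 fun x =>
      Real.continuousAt_rpow_const x _ (Or.inr hμl.le)
  have hfc : Continuous f :=
    (continuous_const.mul ((continuous_const.sub continuous_id).pow d)).mul hrc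
  -- part (c)
  have partC : (0 : ℝ) ∈ S ↔
      μ * T < (d : ℝ) * Real.log ((γ / c₁) ^ (1 / (d : ℝ)) * (1 - Real.exp (-l * T))) := by
    have hz0 : Real.exp (-l * (T - 0)) = Real.exp (-l * T) := by norm_num
    have hzpos : 0 < Real.exp (-l * T) := Real.exp_pos _
    have hzlt : Real.exp (-l * T) < 1 := by
      rw [Real.exp_lt_one_iff]; nlinarith
    have hzIoo : Real.exp (-l * T) ∈ Ioo (0:ℝ) 1 := ⟨hzpos, hzlt⟩
    have hmem0 : (0 : ℝ) ∈ S ↔ c₁ < f (Real.exp (-l * T)) := by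
      rw [hS]
      simp only [mem_setOf_eq]
      rw [claimA 0, hz0]
      exact and_iff_right hT.le
    rw [hmem0]
    rw [← Real.log_lt_log_iff hc₁ (hfpos _ hzIoo), hlogf _ hzIoo, Real.log_exp]
    have hrhs : (d : ℝ) * Real.log ((γ / c₁) ^ (1 / (d : ℝ)) * (1 - Real.exp (-l * T)))
        = Real.log γ - Real.log c₁ + (d : ℝ) * Real.log (1 - Real.exp (-l * T)) := by
      have hdne : (d : ℝ) ≠ 0 := by positivity
      rw [Real.log_mul (by positivity) (by nlinarith [hzlt]),
          Real.log_rpow (div_pos hγ hc₁), Real.log_div (ne_of_gt hγ) (ne_of_gt hc₁)]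
      field_simp
    rw [hrhs]
    have hml : μ / l * (-l * T) = -(μ * T) := by field_simp
    rw [hml]
    constructor <;> intro h <;> linarith
  -- superlevel set in z-space
  set U : Set ℝ := {z | z ∈ Ioo (0:ℝ) 1 ∧ c₁ < f z} with hU
  have hconc : ConcaveOn ℝ (Ioo (0:ℝ) 1)
      (fun z => (d : ℝ) * Real.log (1 - z) + (μ / l) * Real.log z) := by
    have h2 : ConcaveOn ℝ (Ioo (0:ℝ) 1) Real.log :=
      strictConcaveOn_log_Ioi.concaveOn.subset (fun z hz => hz.1) (convex_Ioo 0 1)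
    have h1 : ConcaveOn ℝ (Ioo (0:ℝ) 1) (fun z => Real.log (1 - z)) := by
      refine ⟨convex_Ioo 0 1, ?_⟩
      intro x hx y hy a b ha hb hab
      have hx' : (1:ℝ) - x ∈ Ioi (0:ℝ) := mem_Ioi.2 (by linarith [hx.2])
      have hy' : (1:ℝ) - y ∈ Ioi (0:ℝ) := mem_Ioi.2 (by linarith [hy.2])
      have hkey := strictConcaveOn_log_Ioi.concaveOn.2 hx' hy' ha hb hab
      simp only [smul_eq_mul] at hkey ⊢
      have harg : a * (1 - x) + b * (1 - y) = 1 - (a * x + b * y) := by nlinarith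
      rw [harg] at hkey
      exact hkey
    exact (h1.smul (by positivity : (0:ℝ) ≤ (d:ℝ))).add (h2.smul hμl.le)
  have hqc : ∀ x ∈ U, ∀ y ∈ U, ∀ z, x ≤ z → z ≤ y → z ∈ U := by
    intro x hx y hy z hxz hzy
    have hzI : z ∈ Ioo (0:ℝ) 1 := ⟨lt_of_lt_of_le hx.1.1 hxz, lt_of_le_of_lt hzy hy.1.2⟩
    refine ⟨hzI, ?_⟩
    rcases eq_or_lt_of_le hxz with rfl | hxz'
    · exact hx.2
    rcases eq_or_lt_of_le hzy with rfl | hzy'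
    · exact hy.2
    have hyx : 0 < y - x := by linarith
    set a : ℝ := (y - z) / (y - x) with hadef
    set b : ℝ := (z - x) / (y - x) with hbdef
    have ha : 0 < a := by
      apply div_pos (by linarith) hyx
    have hb : 0 < b := by
      apply div_pos (by linarith) hyx
    have hab : a + b = 1 := by
      rw [hadef, hbdef]; field_simp; ring
    have hcomb : a * x + b * y = z := by
      rw [hadef, hbdef]; field_simp; ring
    have hkey := hconc.2 hx.1 hy.1 ha.le hb.le hab
    simp only [smul_eq_mul] at hkey
    rw [hcomb] at hkey
    rw [← Real.log_lt_log_iff hc₁ (hfpos _ hzI), hlogf _ hzI]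
    have hgx : Real.log c₁ - Real.log γ <
        (d : ℝ) * Real.log (1 - x) + (μ / l) * Real.log x := by
      have h := (Real.log_lt_log_iff hc₁ (hfpos _ hx.1)).2 hx.2
      rw [hlogf _ hx.1] at h; linarith
    have hgy : Real.log c₁ - Real.log γ <
        (d : ℝ) * Real.log (1 - y) + (μ / l) * Real.log y := by
      have h := (Real.log_lt_log_iff hc₁ (hfpos _ hy.1)).2 hy.2
      rw [hlogf _ hy.1] at h; linarith
    have hLsum : a * (Real.log c₁ - Real.log γ) + b * (Real.log c₁ - Real.log γ)
        = Real.log c₁ - Real.log γ := by rw [← add_mul, hab, one_mul]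
    linarith [hkey, mul_pos ha (sub_pos.2 hgx), mul_pos hb (sub_pos.2 hgy), hLsum]
  have hUopen : IsOpen U := by
    have hUeq' : U = Ioo (0:ℝ) 1 ∩ f ⁻¹' (Ioi c₁) := by
      rw [hU]; ext z
      simp only [mem_setOf_eq, mem_inter_iff, mem_preimage, mem_Ioi]
    rw [hUeq']
    exact isOpen_Ioo.inter (hfc.isOpen_preimage _ isOpen_Ioi)
  have hmem : ∀ t : ℝ, t ∈ S ↔ Real.exp (-l * (T - t)) ∈ U := by
    intro t
    rw [hS, hU]
    simp only [mem_setOf_eq]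
    constructor
    · rintro ⟨htT, hlt⟩
      have hc := (claimA t).1 hlt
      have hne1 : t ≠ T := by
        rintro rfl
        simp only [sub_self, mul_zero, Real.exp_zero] at hc
        rw [hf1] at hc; linarith
      have htT' : t < T := lt_of_le_of_ne htT hne1
      refine ⟨⟨Real.exp_pos _, ?_⟩, hc⟩
      rw [Real.exp_lt_one_iff]; nlinarith
    · rintro ⟨⟨_, hlt1⟩, hc⟩
      have h0 : -l * (T - t) < 0 := by
        by_contra hcon
        push_neg at hcon
        have := Real.one_le_exp hcon
        linarith
      have htT : t < T := by nlinarith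
      exact ⟨htT.le, (claimA t).2 hc⟩
  -- translation between t-intervals and z-intervals
  have hid : ∀ x : ℝ, (1 / l) * x = x / l := by
    intro x; rw [one_div, inv_mul_eq_div]
  have hiff1 : ∀ x s : ℝ, T + (1 / l) * x < s ↔ x < l * (s - T) := by
    intro x s
    rw [hid]
    constructor
    · intro h
      have h' := (div_lt_iff₀ hl).1 (show x / l < s - T by linarith)
      linarith
    · intro h
      have h' := (div_lt_iff₀ hl).2 (show x < (s - T) * l by linarith)
      linarith
  have hiff2 : ∀ x s : ℝ, s < T + (1 / l) * x ↔ l * (s - T) < x := by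
    intro x s
    rw [hid]
    constructor
    · intro h
      have h' := (lt_div_iff₀ hl).1 (show s - T < x / l by linarith)
      linarith
    · intro h
      have h' := (lt_div_iff₀ hl).2 (show (s - T) * l < x by linarith)
      linarith
  refine ⟨fun t _ => claimA t, ?_, partC⟩
  rcases eq_empty_or_nonempty U with hUe | hUne
  · left
    rw [eq_empty_iff_forall_notMem]
    intro t ht
    have h := (hmem t).1 ht
    rw [hUe] at h
    exact h
  · right
    have hUsub : U ⊆ Ioo (0:ℝ) 1 := fun z hz => hz.1
    have hbdd : BddBelow U := BddBelow.mono hUsub bddBelow_Ioo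
    have hbdda : BddAbove U := BddAbove.mono hUsub bddAbove_Ioo
    set a : ℝ := sInf U with hadef
    set b : ℝ := sSup U with hbdef
    have hUeq : U = Ioo a b := by
      ext z
      constructor
      · intro hz
        obtain ⟨ε, hε, hball⟩ := Metric.isOpen_iff.1 hUopen z hz
        have hz1 : z - ε / 2 ∈ U := by
          apply hball
          rw [Metric.mem_ball, Real.dist_eq, abs_of_nonpos (by linarith)]
          linarith
        have hz2 : z + ε / 2 ∈ U := by
          apply hball
          rw [Metric.mem_ball, Real.dist_eq, abs_of_nonneg (by linarith)]
          linarith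
        exact ⟨lt_of_le_of_lt (csInf_le hbdd hz1) (by linarith),
          lt_of_lt_of_le (by linarith) (le_csSup hbdda hz2)⟩
      · rintro ⟨hza, hzb⟩
        obtain ⟨u, hu, huz⟩ := exists_lt_of_csInf_lt hUne hza
        obtain ⟨v, hv, hzv⟩ := exists_lt_of_lt_csSup hUne hzb
        exact hqc u hu v hv z huz.le hzv.le
    have ha0 : 0 ≤ a := le_csInf hUne fun z hz => hz.1.1.le
    have hb1 : b ≤ 1 := csSup_le hUne fun z hz => hz.1.2.le
    have hab : a ≤ b := csInf_le_csSup hUne hbdd hbdda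
    have hclos : closure U ⊆ {z | c₁ ≤ f z} := by
      apply closure_minimal (fun z hz => hz.2.le)
      exact isClosed_le continuous_const hfc
    have hfa_ge : c₁ ≤ f a := hclos (csInf_mem_closure hUne hbdd)
    have hfb_ge : c₁ ≤ f b := hclos (csSup_mem_closure hUne hbdda)
    have ha0' : 0 < a := by
      rcases eq_or_lt_of_le ha0 with h | h
      · exfalso; rw [← h, hf0] at hfa_ge; linarith
      · exact h
    have hb1' : b < 1 := by
      rcases eq_or_lt_of_le hb1 with h | h
      · exfalso; rw [h, hf1] at hfb_ge; linarith
      · exact h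
    have haI : a ∈ Ioo (0:ℝ) 1 := ⟨ha0', lt_of_le_of_lt hab hb1'⟩
    have hbI : b ∈ Ioo (0:ℝ) 1 := ⟨lt_of_lt_of_le ha0' hab, hb1'⟩
    have hfa_le : f a ≤ c₁ := by
      by_contra h
      push_neg at h
      have haU : a ∈ U := ⟨haI, h⟩
      rw [hUeq] at haU
      exact lt_irrefl a haU.1
    have hfb_le : f b ≤ c₁ := by
      by_contra h
      push_neg at h
      have hbU : b ∈ U := ⟨hbI, h⟩
      rw [hUeq] at hbU
      exact lt_irrefl b hbU.2
    have hfa : f a = c₁ := le_antisymm hfa_le hfa_ge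
    have hfb : f b = c₁ := le_antisymm hfb_le hfb_ge
    have hab' : a < b := by
      obtain ⟨z, hz⟩ := hUne
      rw [hUeq] at hz
      exact lt_trans hz.1 hz.2
    refine ⟨a, b, haI, hbI, hab', hfa, hfb, ?_, ?_⟩
    · have hlogb : Real.log b < 0 := Real.log_neg hbI.1 hbI.2
      have hpr : (1 / l) * Real.log b < 0 :=
        mul_neg_of_pos_of_neg (by positivity) hlogb
      linarith
    · ext t
      rw [hmem t, hUeq]
      simp only [mem_Ioo]
      have h1 : a < Real.exp (-l * (T - t)) ↔ Real.log a < -l * (T - t) := by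
        conv_lhs => rw [← Real.exp_log ha0']
        rw [Real.exp_lt_exp]
      have h2 : Real.exp (-l * (T - t)) < b ↔ -l * (T - t) < Real.log b := by
        conv_lhs => rw [← Real.exp_log hbI.1]
        rw [Real.exp_lt_exp]
      have he : -l * (T - t) = l * (t - T) := by ring
      rw [h1, h2, he]
      exact and_congr (hiff1 (Real.log a) t).symm (hiff2 (Real.log b) t).symm
end

section
/- Let d ≥ 1 be an integer, λ > 0, μ > 0, and c ≥ 0 real numbers, and let I ⊆ ℝ be a nondegenerate interval. Suppose p_0, …, p_d : I → ℝ are differentiable and satisfy p_k'(t) = (μ + λ(d-k)) p_k(t) - (d-k) λ p_{k+1}(t) - c (d-k) for all 0 ≤ k ≤ d−1 and p_d'(t) = μ p_d(t), for every t ∈ I. If p_0 is constant on I, then p_0(t) ≥ 0 for all t ∈ I; in particular, for any c₁ > 0, p_0 cannot be identically equal to −c₁ on I. -/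
private lemma const_deriv_zero' {f : ℝ → ℝ} {J : Set ℝ} (hJ : IsOpen J) {t : ℝ}
    (ht : t ∈ J) (hcn : ∀ s ∈ J, f s = f t) {v : ℝ} (hv : HasDerivAt f v t) : v = 0 := by
  have h1 : (fun _ : ℝ => f t) =ᶠ[nhds t] f :=
    Filter.eventuallyEq_of_mem (hJ.mem_nhds ht) (fun s hs => (hcn s hs).symm)
  exact (hv.congr_of_eventuallyEq h1).unique (hasDerivAt_const t (f t))

/-- Rigidity of the adjoint (costate) system: if the costate variables satisfy
the adjoint ODEs on a nondegenerate interval `I` and `p₀` is constant on `I`,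
then `p₀ ≥ 0` on `I`; in particular `p₀` cannot be identically `-c₁ < 0`
(no singular arcs). -/
theorem adjoint_no_singular_arc
    (d : ℕ) (hd : 1 ≤ d) (l μ c : ℝ) (hl : 0 < l) (hμ : 0 < μ) (hc : 0 ≤ c)
    (I : Set ℝ) (hI : I.OrdConnected) (hI2 : ∃ a ∈ I, ∃ b ∈ I, a < b)
    (p : ℕ → ℝ → ℝ)
    (hpk : ∀ k, k < d → ∀ t ∈ I,
      HasDerivAt (p k)
        ((μ + l * ((d - k : ℕ) : ℝ)) * p k t - ((d - k : ℕ) : ℝ) * l * p (k + 1) t -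
          c * ((d - k : ℕ) : ℝ)) t)
    (hpd : ∀ t ∈ I, HasDerivAt (p d) (μ * p d t) t)
    (hconst : ∀ t ∈ I, ∀ t' ∈ I, p 0 t = p 0 t') :
    (∀ t ∈ I, 0 ≤ p 0 t) ∧
    ∀ c₁ : ℝ, 0 < c₁ → ¬(∀ t ∈ I, p 0 t = -c₁) := by
  obtain ⟨a, haI, b, hbI, hab⟩ := hI2
  set J := Set.Ioo a b with hJdef
  have hJopen : IsOpen J := isOpen_Ioo
  have hJI : J ⊆ I := fun x hx => hI.out haI hbI ⟨hx.1.le, hx.2.le⟩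
  set t0 := (a + b) / 2 with ht0def
  have ht0J : t0 ∈ J := ⟨by simp only [ht0def]; linarith, by simp only [ht0def]; linarith⟩
  have ht0I : t0 ∈ I := hJI ht0J
  -- all p k are constant on J
  have key : ∀ k, k ≤ d → ∀ s ∈ J, p k s = p k t0 := by
    intro k
    induction k with
    | zero => intro _ s hs; exact hconst s (hJI hs) t0 ht0I
    | succ k ih =>
      intro hk s hs
      have hkd : k < d := hk
      have hck : ∀ s ∈ J, p k s = p k t0 := ih (Nat.le_of_lt hkd)
      have hm : (0:ℝ) < ((d - k : ℕ) : ℝ) := by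
        have : 0 < d - k := Nat.sub_pos_of_lt hkd
        exact_mod_cast this
      have hz : ∀ u ∈ J, (μ + l * ((d - k : ℕ) : ℝ)) * p k u
          - ((d - k : ℕ) : ℝ) * l * p (k+1) u - c * ((d - k : ℕ) : ℝ) = 0 := by
        intro u hu
        have hcu : ∀ s ∈ J, p k s = p k u := fun s hs => (hck s hs).trans (hck u hu).symm
        exact const_deriv_zero' hJopen hu hcu (hpk k hkd u (hJI hu))
      have h1 := hz s hs
      have h2 := hz t0 ht0J
      rw [hck s hs] at h1
      have heq : ((d - k : ℕ) : ℝ) * l * p (k+1) s = ((d - k : ℕ) : ℝ) * l * p (k+1) t0 := by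
        linarith
      exact mul_left_cancel₀ (ne_of_gt (mul_pos hm hl)) heq
  -- the stationarity equations at t0
  have hzero : ∀ k, k < d → (μ + l * ((d - k : ℕ) : ℝ)) * p k t0
      - ((d - k : ℕ) : ℝ) * l * p (k+1) t0 - c * ((d - k : ℕ) : ℝ) = 0 := by
    intro k hkd
    exact const_deriv_zero' hJopen ht0J (key k hkd.le) (hpk k hkd t0 ht0I)
  have hpd0 : p d t0 = 0 := by
    have h := const_deriv_zero' hJopen ht0J (key d le_rfl) (hpd t0 ht0I)
    exact (mul_eq_zero.mp h).resolve_left (ne_of_gt hμ)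
  -- backward induction: p (d - j) t0 ≥ 0
  have hnn : ∀ j, j ≤ d → 0 ≤ p (d - j) t0 := by
    intro j
    induction j with
    | zero => intro _; simpa using hpd0.ge
    | succ j ih =>
      intro hj
      have ihj := ih (Nat.le_of_succ_le hj)
      set k := d - (j+1) with hkdef
      have hkd : k < d := by omega
      have hk1 : k + 1 = d - j := by omega
      have hz := hzero k hkd
      rw [hk1] at hz
      have hm : (0:ℝ) < ((d - k : ℕ) : ℝ) := by
        have : 0 < d - k := Nat.sub_pos_of_lt hkd
        exact_mod_cast this
      have hnum : 0 ≤ ((d - k : ℕ) : ℝ) * l * p (d - j) t0 + c * ((d - k : ℕ) : ℝ) :=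
        add_nonneg (mul_nonneg (mul_nonneg hm.le hl.le) ihj) (mul_nonneg hc hm.le)
      have hden : 0 < μ + l * ((d - k : ℕ) : ℝ) := by positivity
      nlinarith [hz, hnum, hden]
  have h00 : 0 ≤ p 0 t0 := by simpa using hnn d le_rfl
  constructor
  · intro t ht
    rw [hconst t ht t0 ht0I]
    exact h00
  · intro c₁ hc₁ hcon
    have h1 := hcon t0 ht0I
    linarith [h00, h1 ▸ h00]
end

section
/- Let d ≥ 2 be an integer and λ > 0, μ > 0, γ > 0, T > 0, C ≥ 0 real numbers, and define p₀ : [0,T] → ℝ by p₀(t) = -γ (1 - e^{-λ(T-t)})^d e^{-μ(T-t)} + (C/(μ+λ)) (1 - e^{-(μ+λ)(T-t)}). Then there exist 0 ≤ t_m ≤ t_M ≤ T such that p₀ is nonincreasing on [0, t_m], nondecreasing on [t_m, t_M], and nonincreasing on [t_M, T]. -/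
open Real Set

/-- Auxiliary function: the sign-determining factor of the derivative of `p₀`. -/
noncomputable def gAux (k : ℕ) (l μ γ T C : ℝ) : ℝ → ℝ := fun t =>
  γ * (1 - Real.exp (-l * (T - t))) ^ (k + 1) *
      (((k + 2 : ℕ) : ℝ) * l + μ) * Real.exp (-l * (T - t)) -
    γ * (1 - Real.exp (-l * (T - t))) ^ (k + 1) * μ - C * Real.exp (-l * (T - t))

lemma gAux_eq (k : ℕ) (l μ γ T C t : ℝ) :
    gAux k l μ γ T C t =
      γ * (1 - Real.exp (-l * (T - t))) ^ (k + 1) *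
        ((((k + 2 : ℕ) : ℝ) * l + μ) * Real.exp (-l * (T - t)) - μ) -
      C * Real.exp (-l * (T - t)) := by
  unfold gAux; ring

lemma gAux_cont (k : ℕ) (l μ γ T C : ℝ) : Continuous (gAux k l μ γ T C) := by
  unfold gAux; fun_prop

lemma hasDerivAt_costate (k : ℕ) (l μ γ T C : ℝ) (hl : 0 < l) (hμ : 0 < μ) (t : ℝ) :
    HasDerivAt (fun t => -γ * (1 - Real.exp (-l * (T - t))) ^ (k + 2) * Real.exp (-μ * (T - t)) +
        (C / (μ + l)) * (1 - Real.exp (-(μ + l) * (T - t))))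
      (Real.exp (-μ * (T - t)) * gAux k l μ γ T C t) t := by
  have hml : μ + l ≠ 0 := by positivity
  have hE : HasDerivAt (fun t => Real.exp (-l * (T - t))) (l * Real.exp (-l * (T - t))) t := by
    have h1 : HasDerivAt (fun t : ℝ => -l * (T - t)) l t := by
      simpa using ((hasDerivAt_id t).const_sub T).const_mul (-l)
    simpa [mul_comm] using h1.exp
  have hF : HasDerivAt (fun t => Real.exp (-μ * (T - t))) (μ * Real.exp (-μ * (T - t))) t := by
    have h1 : HasDerivAt (fun t : ℝ => -μ * (T - t)) μ t := by
      simpa using ((hasDerivAt_id t).const_sub T).const_mul (-μ)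
    simpa [mul_comm] using h1.exp
  have hG : HasDerivAt (fun t => Real.exp (-(μ + l) * (T - t)))
      ((μ + l) * Real.exp (-(μ + l) * (T - t))) t := by
    have h1 : HasDerivAt (fun t : ℝ => -(μ + l) * (T - t)) (μ + l) t := by
      simpa using ((hasDerivAt_id t).const_sub T).const_mul (-(μ + l))
    simpa [mul_comm] using h1.exp
  have h1 := (((hE.const_sub 1).pow (k + 2)).const_mul (-γ)).mul hF
  have h2 := (hG.const_sub 1).const_mul (C / (μ + l))
  have h3 := h1.add h2
  refine h3.congr_deriv ?_
  have hEF : Real.exp (-(μ + l) * (T - t)) =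
      Real.exp (-l * (T - t)) * Real.exp (-μ * (T - t)) := by
    rw [← Real.exp_add]; congr 1; ring
  rw [hEF, gAux_eq]
  simp only [show k + 2 - 1 = k + 1 from rfl, Pi.pow_apply]
  field_simp
  ring_nf

lemma convexOn_psi (k : ℕ) (γ μ C : ℝ) (hγμ : 0 ≤ γ * μ) (hC : 0 ≤ C) :
    ConvexOn ℝ (Set.Ioo (0:ℝ) 1)
      (fun x : ℝ => γ * μ * x ^ (-1:ℤ) + C * (1 - x) ^ (-(k + 1 : ℕ) : ℤ)) := by
  have h1 : ConvexOn ℝ (Set.Ioo (0:ℝ) 1) (fun x : ℝ => γ * μ * x ^ (-1:ℤ)) := by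
    have := ((convexOn_zpow (-1:ℤ)).subset Set.Ioo_subset_Ioi_self (convex_Ioo 0 1)).smul hγμ
    simpa [smul_eq_mul] using this
  have h2 : ConvexOn ℝ (Set.Ioo (0:ℝ) 1) (fun x : ℝ => C * (1 - x) ^ (-(k + 1 : ℕ) : ℤ)) := by
    have hc := (convexOn_zpow (-(k + 1 : ℕ) : ℤ)).comp_affineMap (AffineMap.lineMap (1:ℝ) (0:ℝ))
    have hsub : Set.Ioo (0:ℝ) 1 ⊆ (AffineMap.lineMap (1:ℝ) (0:ℝ)) ⁻¹' (Set.Ioi 0) := by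
      intro x hx
      simp only [Set.mem_preimage, AffineMap.lineMap_apply, smul_eq_mul, Set.mem_Ioi,
        vsub_eq_sub, vadd_eq_add]
      nlinarith [hx.2]
    have := (hc.subset hsub (convex_Ioo 0 1)).smul hC
    simpa [smul_eq_mul, Function.comp, AffineMap.lineMap_apply, vsub_eq_sub, vadd_eq_add,
      show ∀ x : ℝ, x • (0 - 1 : ℝ) + 1 = 1 - x from fun x => by simp; ring,
      sub_eq_neg_add] using this
  exact h1.add h2

lemma convexOn_le_of_between {s : Set ℝ} {f : ℝ → ℝ} (hf : ConvexOn ℝ s f)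
    {a b c K : ℝ} (ha : a ∈ s) (hb : b ∈ s) (hac : a ≤ c) (hcb : c ≤ b)
    (hfa : f a ≤ K) (hfb : f b ≤ K) : f c ≤ K := by
  have hseg : c ∈ segment ℝ a b := by
    rw [segment_eq_Icc (hac.trans hcb)]; exact ⟨hac, hcb⟩
  obtain ⟨θ, σ, hθ, hσ, hsum, rfl⟩ := hseg
  have h := hf.2 ha hb hθ hσ hsum
  simp only [smul_eq_mul] at h ⊢
  have hKK : θ * K + σ * K = K := by rw [← add_mul, hsum, one_mul]
  linarith [mul_le_mul_of_nonneg_left hfa hθ, mul_le_mul_of_nonneg_left hfb hσ]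

lemma gAux_quasi (k : ℕ) {l μ γ T C : ℝ} (hl : 0 < l) (hμ : 0 < μ) (hγ : 0 < γ) (hC : 0 ≤ C)
    {a c b : ℝ} (ha : a ∈ Set.Icc 0 T) (hb : b ∈ Set.Icc 0 T) (hac : a ≤ c) (hcb : c ≤ b)
    (hga : 0 ≤ gAux k l μ γ T C a) (hgb : 0 ≤ gAux k l μ γ T C b) :
    0 ≤ gAux k l μ γ T C c := by
  have hcT : c ≤ T := hcb.trans hb.2
  have hEmono : ∀ u v : ℝ, u ≤ v → Real.exp (-l * (T - u)) ≤ Real.exp (-l * (T - v)) := by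
    intro u v h; exact Real.exp_le_exp.2 (by nlinarith)
  have hE1 : ∀ u : ℝ, u ≤ T → Real.exp (-l * (T - u)) ≤ 1 := by
    intro u h
    rw [Real.exp_le_one_iff]; nlinarith
  have hEpos : ∀ u : ℝ, 0 < Real.exp (-l * (T - u)) := fun u => Real.exp_pos _
  by_cases hb1 : Real.exp (-l * (T - b)) = 1
  · -- Case E b = 1 : forces C = 0
    have hC0 : C = 0 := by
      have h := hgb
      rw [gAux_eq, hb1] at h
      simp at h
      linarith
    by_cases hc1 : Real.exp (-l * (T - c)) = 1
    · rw [gAux_eq, hc1, hC0]; simp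
    · have hEc1 : Real.exp (-l * (T - c)) < 1 := lt_of_le_of_ne (hE1 c hcT) hc1
      have hEac : Real.exp (-l * (T - a)) ≤ Real.exp (-l * (T - c)) := hEmono a c hac
      have hEa1 : Real.exp (-l * (T - a)) < 1 := lt_of_le_of_lt hEac hEc1
      have hga' : 0 ≤ γ * (1 - Real.exp (-l * (T - a))) ^ (k + 1) *
          ((((k + 2 : ℕ) : ℝ) * l + μ) * Real.exp (-l * (T - a)) - μ) := by
        have := hga; rw [gAux_eq, hC0] at this; linarith
      have hX : 0 ≤ (((k + 2 : ℕ) : ℝ) * l + μ) * Real.exp (-l * (T - a)) - μ :=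
        (mul_nonneg_iff_of_pos_left
          (mul_pos hγ (pow_pos (by linarith) _))).mp hga'
      have hcoef : (0:ℝ) ≤ ((k + 2 : ℕ) : ℝ) * l + μ := by positivity
      have hXc : 0 ≤ (((k + 2 : ℕ) : ℝ) * l + μ) * Real.exp (-l * (T - c)) - μ := by
        nlinarith [mul_le_mul_of_nonneg_left hEac hcoef]
      rw [gAux_eq, hC0]
      have : 0 ≤ γ * (1 - Real.exp (-l * (T - c))) ^ (k + 1) *
          ((((k + 2 : ℕ) : ℝ) * l + μ) * Real.exp (-l * (T - c)) - μ) :=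
        mul_nonneg (mul_nonneg hγ.le (pow_nonneg (by linarith) _)) hXc
      linarith
  · -- Case E b < 1 : concavity argument
    have hEb1 : Real.exp (-l * (T - b)) < 1 := lt_of_le_of_ne (hE1 b hb.2) hb1
    have hEcb : Real.exp (-l * (T - c)) ≤ Real.exp (-l * (T - b)) := hEmono c b hcb
    have hEac : Real.exp (-l * (T - a)) ≤ Real.exp (-l * (T - c)) := hEmono a c hac
    have hEc1 : Real.exp (-l * (T - c)) < 1 := lt_of_le_of_lt hEcb hEb1
    have hEa1 : Real.exp (-l * (T - a)) < 1 := lt_of_le_of_lt hEac hEc1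
    set ψ : ℝ → ℝ := fun x => γ * μ * x ^ (-1:ℤ) + C * (1 - x) ^ (-(k + 1 : ℕ) : ℤ) with hψ
    set K : ℝ := γ * (((k + 2 : ℕ) : ℝ) * l + μ) with hK
    have hrel : ∀ x : ℝ, 0 < x → x < 1 →
        γ * (1 - x) ^ (k + 1) * ((((k + 2 : ℕ) : ℝ) * l + μ) * x - μ) - C * x =
          x * (1 - x) ^ (k + 1) * (K - ψ x) := by
      intro x hx0 hx1
      have h1x : (1:ℝ) - x ≠ 0 := by linarith
      have hx : x ≠ 0 := ne_of_gt hx0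
      rw [hψ, hK]
      simp only [zpow_neg, zpow_one, zpow_natCast]
      field_simp
      ring
    have hrw : ∀ u : ℝ, u ≤ T → Real.exp (-l * (T - u)) < 1 → gAux k l μ γ T C u =
        Real.exp (-l * (T - u)) * (1 - Real.exp (-l * (T - u))) ^ (k + 1) *
          (K - ψ (Real.exp (-l * (T - u)))) := by
      intro u _ hu1
      rw [gAux_eq, hrel _ (hEpos u) hu1]
    have hψa : ψ (Real.exp (-l * (T - a))) ≤ K := by
      have h := hga
      rw [hrw a (hac.trans hcT) hEa1] at h
      have := (mul_nonneg_iff_of_pos_left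
        (mul_pos (hEpos a) (pow_pos (by linarith) (k + 1)))).mp h
      linarith
    have hψb : ψ (Real.exp (-l * (T - b))) ≤ K := by
      have h := hgb
      rw [hrw b hb.2 hEb1] at h
      have := (mul_nonneg_iff_of_pos_left
        (mul_pos (hEpos b) (pow_pos (by linarith) (k + 1)))).mp h
      linarith
    have hconv := convexOn_psi k γ μ C (by positivity) hC
    have hψc : ψ (Real.exp (-l * (T - c))) ≤ K :=
      convexOn_le_of_between hconv ⟨hEpos a, hEa1⟩ ⟨hEpos b, hEb1⟩ hEac hEcb hψa hψb
    rw [hrw c hcT hEc1]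
    exact mul_nonneg (mul_nonneg (hEpos c).le (pow_nonneg (by linarith) _))
      (by linarith)

/-- Decreasing–increasing–decreasing shape of the costate variable
`p₀(t) = -γ(1-e^{-λ(T-t)})^d e^{-μ(T-t)} + (C/(μ+λ))(1-e^{-(μ+λ)(T-t)})`
on `[0,T]`. -/
theorem costate_shape
    (d : ℕ) (hd : 2 ≤ d) (l μ γ T C : ℝ)
    (hl : 0 < l) (hμ : 0 < μ) (hγ : 0 < γ) (hT : 0 < T) (hC : 0 ≤ C)
    (p₀ : ℝ → ℝ)
    (hp : ∀ t : ℝ, p₀ t =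
      -γ * (1 - Real.exp (-l * (T - t))) ^ d * Real.exp (-μ * (T - t)) +
        (C / (μ + l)) * (1 - Real.exp (-(μ + l) * (T - t)))) :
    ∃ tm tM : ℝ, 0 ≤ tm ∧ tm ≤ tM ∧ tM ≤ T ∧
      AntitoneOn p₀ (Set.Icc 0 tm) ∧
      MonotoneOn p₀ (Set.Icc tm tM) ∧
      AntitoneOn p₀ (Set.Icc tM T) := by
  obtain ⟨k, rfl⟩ : ∃ k, d = k + 2 := ⟨d - 2, by omega⟩
  have hpfun : p₀ = fun t => -γ * (1 - Real.exp (-l * (T - t))) ^ (k + 2) *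
      Real.exp (-μ * (T - t)) +
        (C / (μ + l)) * (1 - Real.exp (-(μ + l) * (T - t))) := funext hp
  have hderiv : ∀ t : ℝ, HasDerivAt p₀ (Real.exp (-μ * (T - t)) * gAux k l μ γ T C t) t := by
    intro t
    rw [hpfun]
    exact hasDerivAt_costate k l μ γ T C hl hμ t
  have Hanti : ∀ a b : ℝ, (∀ t ∈ Set.Ioo a b, gAux k l μ γ T C t ≤ 0) →
      AntitoneOn p₀ (Set.Icc a b) := by
    intro a b h
    apply antitoneOn_of_deriv_nonpos (convex_Icc a b)
      (fun t _ => (hderiv t).differentiableAt.continuousAt.continuousWithinAt)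
    · rw [interior_Icc]
      exact fun t _ => (hderiv t).differentiableAt.differentiableWithinAt
    · rw [interior_Icc]
      intro t ht
      rw [(hderiv t).deriv]
      exact mul_nonpos_iff.2 (Or.inl ⟨(Real.exp_pos _).le, h t ht⟩)
  have Hmono : ∀ a b : ℝ, (∀ t ∈ Set.Ioo a b, 0 ≤ gAux k l μ γ T C t) →
      MonotoneOn p₀ (Set.Icc a b) := by
    intro a b h
    apply monotoneOn_of_deriv_nonneg (convex_Icc a b)
      (fun t _ => (hderiv t).differentiableAt.continuousAt.continuousWithinAt)
    · rw [interior_Icc]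
      exact fun t _ => (hderiv t).differentiableAt.differentiableWithinAt
    · rw [interior_Icc]
      intro t ht
      rw [(hderiv t).deriv]
      exact mul_nonneg (Real.exp_pos _).le (h t ht)
  by_cases hS : ∃ t, t ∈ Set.Icc (0:ℝ) T ∧ 0 ≤ gAux k l μ γ T C t
  · set S : Set ℝ := {t : ℝ | t ∈ Set.Icc (0:ℝ) T ∧ 0 ≤ gAux k l μ γ T C t} with hSdef
    have hSne : S.Nonempty := hS
    have hScl : IsClosed S := by
      have : S = Set.Icc (0:ℝ) T ∩ (gAux k l μ γ T C) ⁻¹' (Set.Ici 0) := rfl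
      rw [this]
      exact isClosed_Icc.inter (isClosed_Ici.preimage (gAux_cont k l μ γ T C))
    have hbdb : BddBelow S := ⟨0, fun x hx => hx.1.1⟩
    have hbda : BddAbove S := ⟨T, fun x hx => hx.1.2⟩
    have htm : sInf S ∈ S := hScl.csInf_mem hSne hbdb
    have htM : sSup S ∈ S := hScl.csSup_mem hSne hbda
    refine ⟨sInf S, sSup S, htm.1.1, csInf_le_csSup hSne hbdb hbda, htM.1.2, ?_, ?_, ?_⟩
    · apply Hanti
      intro t ht
      by_contra hgt
      push_neg at hgt
      have htS : t ∈ S := ⟨⟨ht.1.le, ht.2.le.trans htm.1.2⟩, hgt.le⟩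
      exact absurd (csInf_le hbdb htS) (not_le.2 ht.2)
    · apply Hmono
      intro t ht
      exact gAux_quasi k hl hμ hγ hC htm.1 htM.1 ht.1.le ht.2.le htm.2 htM.2
    · apply Hanti
      intro t ht
      by_contra hgt
      push_neg at hgt
      have htS : t ∈ S := ⟨⟨htM.1.1.trans ht.1.le, ht.2.le⟩, hgt.le⟩
      exact absurd (le_csSup hbda htS) (not_le.2 ht.1)
  · push_neg at hS
    refine ⟨T, T, hT.le, le_refl T, le_refl T, ?_, ?_, ?_⟩
    · apply Hanti
      intro t ht
      exact (hS t ⟨ht.1.le, ht.2.le⟩).le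
    · intro x hx y hy _
      have hx' : x = T := le_antisymm hx.2 hx.1
      have hy' : y = T := le_antisymm hy.2 hy.1
      rw [hx', hy']
    · intro x hx y hy _
      have hx' : x = T := le_antisymm hx.2 hx.1
      have hy' : y = T := le_antisymm hy.2 hy.1
      rw [hx', hy']
end

section
/- Let d ≥ 2 be an integer and λ > 0, μ > 0, γ > 0, T > 0, C ≥ 0, c₁ > 0 real numbers, and define p₀ : [0,T] → ℝ by p₀(t) = -γ (1 - e^{-λ(T-t)})^d e^{-μ(T-t)} + (C/(μ+λ)) (1 - e^{-(μ+λ)(T-t)}). Then the set B = { t ∈ [0,T] : p₀(t) < -c₁ } is order-convex (for all t₁, t₂ ∈ B and t₁ ≤ t ≤ t₂ one has t ∈ B), and T ∉ B. -/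
open Set

/-- The factor `φ(x)` appearing in `p₀'(t) = e^{-μ(T-t)} φ(e^{-l(T-t)})`. -/
noncomputable def actPhi (l μ γ C : ℝ) (k : ℕ) (x : ℝ) : ℝ :=
  γ * ((1 - x) ^ (k + 1) * ((μ + ((k : ℝ) + 2) * l) * x - μ)) - C * x

/-- The derivative of `actPhi`. -/
noncomputable def actPhi' (l μ γ C : ℝ) (k : ℕ) (x : ℝ) : ℝ :=
  γ * ((k : ℝ) + 2) * (1 - x) ^ k * ((μ + l) - (μ + ((k : ℝ) + 2) * l) * x) - C

lemma hasDerivAt_actPhi (l μ γ C : ℝ) (k : ℕ) (x : ℝ) :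
    HasDerivAt (actPhi l μ γ C k) (actPhi' l μ γ C k x) x := by
  have h1 : HasDerivAt (fun x : ℝ => (1 - x) ^ (k + 1))
      ((↑(k + 1) : ℝ) * (1 - x) ^ k * (-1)) x := by
    simpa using ((hasDerivAt_id x).const_sub 1).fun_pow (k + 1)
  have h2 : HasDerivAt (fun x : ℝ => (μ + ((k : ℝ) + 2) * l) * x - μ)
      (μ + ((k : ℝ) + 2) * l) x := by
    simpa using ((hasDerivAt_id x).const_mul (μ + ((k : ℝ) + 2) * l)).sub_const μ
  have h3 := ((h1.fun_mul h2).const_mul γ).sub ((hasDerivAt_id x).const_mul C)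
  refine h3.congr_deriv ?_
  unfold actPhi'
  push_cast
  ring

lemma actPhi'_pos_mono {l μ γ C : ℝ} {k : ℕ} (hl : 0 < l) (hμ : 0 < μ) (hγ : 0 < γ)
    (hC : 0 ≤ C) {y z : ℝ} (hyz : y ≤ z) (hz1 : z ≤ 1)
    (h : 0 < actPhi' l μ γ C k z) : 0 < actPhi' l μ γ C k y := by
  unfold actPhi' at h ⊢
  set A : ℝ := μ + ((k : ℝ) + 2) * l with hA
  have hApos : 0 < A := by positivity
  have hk2 : (0 : ℝ) < γ * ((k : ℝ) + 2) := by positivity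
  have hzk : (0 : ℝ) ≤ (1 - z) ^ k := pow_nonneg (by linarith) k
  have hlin : 0 < (μ + l) - A * z := by
    by_contra hle
    push_neg at hle
    have h1 : γ * ((k : ℝ) + 2) * (1 - z) ^ k * ((μ + l) - A * z) ≤ 0 :=
      mul_nonpos_of_nonneg_of_nonpos (by positivity) hle
    linarith
  have hyk : (1 - z) ^ k ≤ (1 - y) ^ k :=
    pow_le_pow_left₀ (by linarith) (by linarith) k
  have hliny : (μ + l) - A * z ≤ (μ + l) - A * y := by
    have := mul_le_mul_of_nonneg_left hyz hApos.le
    linarith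
  have hyk0 : (0 : ℝ) ≤ (1 - y) ^ k := le_trans hzk hyk
  have key : (1 - z) ^ k * ((μ + l) - A * z) ≤ (1 - y) ^ k * ((μ + l) - A * y) :=
    mul_le_mul hyk hliny hlin.le hyk0
  nlinarith [mul_le_mul_of_nonneg_left key hk2.le]

lemma actPhi_qc {l μ γ C : ℝ} {k : ℕ} (hl : 0 < l) (hμ : 0 < μ) (hγ : 0 < γ)
    (hC : 0 ≤ C) {a b c : ℝ} (hab : a ≤ b) (hbc : b ≤ c) (hc1 : c ≤ 1)
    (ha : 0 < actPhi l μ γ C k a) (hc : 0 < actPhi l μ γ C k c) :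
    0 < actPhi l μ γ C k b := by
  have hdiff : Differentiable ℝ (actPhi l μ γ C k) :=
    fun x => (hasDerivAt_actPhi l μ γ C k x).differentiableAt
  have hderiv : ∀ x, deriv (actPhi l μ γ C k) x = actPhi' l μ γ C k x :=
    fun x => (hasDerivAt_actPhi l μ γ C k x).deriv
  by_cases H : ∀ y ∈ Set.Icc a b, 0 < actPhi' l μ γ C k y
  · have hm : MonotoneOn (actPhi l μ γ C k) (Set.Icc a b) :=
      monotoneOn_of_deriv_nonneg (convex_Icc a b) hdiff.continuous.continuousOn
        hdiff.differentiableOn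
        (fun x hx => by
          rw [interior_Icc] at hx
          rw [hderiv]
          exact (H x (Set.Ioo_subset_Icc_self hx)).le)
    have := hm (Set.left_mem_Icc.2 hab) (Set.right_mem_Icc.2 hab) hab
    linarith
  · push_neg at H
    obtain ⟨y, hy, hy0⟩ := H
    have hanti : AntitoneOn (actPhi l μ γ C k) (Set.Icc y c) :=
      antitoneOn_of_deriv_nonpos (convex_Icc y c) hdiff.continuous.continuousOn
        hdiff.differentiableOn
        (fun x hx => by
          rw [interior_Icc] at hx
          rw [hderiv]
          by_contra hpos
          push_neg at hpos
          exact absurd (actPhi'_pos_mono hl hμ hγ hC hx.1.le (hx.2.le.trans hc1) hpos)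
            (not_lt.2 hy0))
    have := hanti ⟨hy.2, hbc⟩ ⟨hy.2.trans hbc, le_refl c⟩ hbc
    linarith

/-- Threshold structure of the optimal activation set: the set
`B = {t ∈ [0,T] : p₀(t) < -c₁}` is order-convex and does not contain `T`,
where `p₀` is the closed-form costate variable. -/
theorem activation_set_is_interval
    (d : ℕ) (hd : 2 ≤ d) (l μ γ T C c₁ : ℝ)
    (hl : 0 < l) (hμ : 0 < μ) (hγ : 0 < γ) (hT : 0 < T) (hC : 0 ≤ C) (hc₁ : 0 < c₁)
    (p₀ : ℝ → ℝ)
    (hp : ∀ t : ℝ, p₀ t =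
      -γ * (1 - Real.exp (-l * (T - t))) ^ d * Real.exp (-μ * (T - t)) +
        (C / (μ + l)) * (1 - Real.exp (-(μ + l) * (T - t))))
    (B : Set ℝ) (hB : B = {t ∈ Set.Icc (0 : ℝ) T | p₀ t < -c₁}) :
    (∀ t₁ ∈ B, ∀ t₂ ∈ B, ∀ t : ℝ, t₁ ≤ t → t ≤ t₂ → t ∈ B) ∧ T ∉ B := by
  subst hB
  obtain ⟨k, rfl⟩ : ∃ k, d = k + 2 := ⟨d - 2, by omega⟩
  have hμl : 0 < μ + l := by linarith
  -- abbreviations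
  set E : ℝ → ℝ := fun t => Real.exp (-l * (T - t)) with hEdef
  set M : ℝ → ℝ := fun t => Real.exp (-μ * (T - t)) with hMdef
  set ψ : ℝ → ℝ := fun t => actPhi l μ γ C k (E t) with hψdef
  -- basic derivative facts
  have hE : ∀ t, HasDerivAt E (E t * l) t := by
    intro t
    have h0 : HasDerivAt (fun t : ℝ => -l * (T - t)) l t := by
      have := ((hasDerivAt_id t).const_sub T).const_mul (-l)
      simpa using this
    exact h0.exp
  have hM : ∀ t, HasDerivAt M (M t * μ) t := by
    intro t
    have h0 : HasDerivAt (fun t : ℝ => -μ * (T - t)) μ t := by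
      have := ((hasDerivAt_id t).const_sub T).const_mul (-μ)
      simpa using this
    exact h0.exp
  have hX : ∀ t, HasDerivAt (fun t => Real.exp (-(μ + l) * (T - t)))
      (Real.exp (-(μ + l) * (T - t)) * (μ + l)) t := by
    intro t
    have h0 : HasDerivAt (fun t : ℝ => -(μ + l) * (T - t)) (μ + l) t := by
      have := ((hasDerivAt_id t).const_sub T).const_mul (-(μ + l))
      simpa using this
    exact h0.exp
  -- derivative of p₀
  have hP : ∀ t, HasDerivAt p₀ (M t * ψ t) t := by
    intro t
    have hpow := ((hE t).const_sub 1).fun_pow (k + 2)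
    have h2 := (hpow.const_mul (-γ)).fun_mul (hM t)
    have h3 := ((hX t).const_sub 1).const_mul (C / (μ + l))
    have hsum := h2.add h3
    have heq : p₀ = fun t => -γ * (1 - E t) ^ (k + 2) * M t +
        C / (μ + l) * (1 - Real.exp (-(μ + l) * (T - t))) := funext hp
    rw [heq]
    refine hsum.congr_deriv ?_
    have hsplit : Real.exp (-(μ + l) * (T - t)) = E t * M t := by
      rw [hEdef, hMdef]
      simp only
      rw [← Real.exp_add]
      ring_nf
    rw [hsplit, hψdef]
    simp only [actPhi]
    have hexp : (k + 2 - 1 : ℕ) = k + 1 := by omega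
    rw [hexp]
    push_cast
    field_simp
    ring
  have hdiffp : Differentiable ℝ p₀ := fun t => (hP t).differentiableAt
  have hderivp : ∀ t, deriv p₀ t = M t * ψ t := fun t => (hP t).deriv
  have hMpos : ∀ t, 0 < M t := fun t => Real.exp_pos _
  -- monotonicity helpers
  have hanti : ∀ a b : ℝ, (∀ u ∈ Set.Icc a b, ψ u ≤ 0) → AntitoneOn p₀ (Set.Icc a b) := by
    intro a b h
    refine antitoneOn_of_deriv_nonpos (convex_Icc a b) hdiffp.continuous.continuousOn
      hdiffp.differentiableOn (fun x hx => ?_)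
    rw [interior_Icc] at hx
    rw [hderivp]
    exact mul_nonpos_of_nonneg_of_nonpos (hMpos x).le (h x (Set.Ioo_subset_Icc_self hx))
  have hmono : ∀ a b : ℝ, (∀ u ∈ Set.Icc a b, 0 ≤ ψ u) → MonotoneOn p₀ (Set.Icc a b) := by
    intro a b h
    refine monotoneOn_of_deriv_nonneg (convex_Icc a b) hdiffp.continuous.continuousOn
      hdiffp.differentiableOn (fun x hx => ?_)
    rw [interior_Icc] at hx
    rw [hderivp]
    exact mul_nonneg (hMpos x).le (h x (Set.Ioo_subset_Icc_self hx))
  -- E is monotone and bounded by 1 on (-∞, T]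
  have hEmono : ∀ {a b : ℝ}, a ≤ b → E a ≤ E b := by
    intro a b hab
    apply Real.exp_le_exp.2
    nlinarith
  have hE1 : ∀ {t : ℝ}, t ≤ T → E t ≤ 1 := by
    intro t ht
    apply Real.exp_le_one_iff.2
    nlinarith
  -- order convexity of {t | 0 < ψ t}
  have hU : ∀ u v w : ℝ, u ≤ v → v ≤ w → w ≤ T → 0 < ψ u → 0 < ψ w → 0 < ψ v :=
    fun u v w huv hvw hwT hu hw =>
      actPhi_qc hl hμ hγ hC (hEmono huv) (hEmono hvw) (hE1 hwT) hu hw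
  -- p₀ T = 0
  have hP0T : p₀ T = 0 := by
    rw [hp]
    simp [zero_pow (show k + 2 ≠ 0 by omega)]
  constructor
  · intro t₁ ht₁ t₂ ht₂ t h₁t ht₂'
    simp only [Set.mem_setOf_eq, Set.mem_Icc] at ht₁ ht₂ ⊢
    obtain ⟨⟨h10, h1T⟩, h1lt⟩ := ht₁
    obtain ⟨⟨h20, h2T⟩, h2lt⟩ := ht₂
    refine ⟨⟨h10.trans h₁t, ht₂'.trans h2T⟩, ?_⟩
    by_cases H : ∀ u ∈ Set.Icc t₁ t, ψ u ≤ 0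
    · have := hanti t₁ t H (Set.left_mem_Icc.2 h₁t) (Set.right_mem_Icc.2 h₁t) h₁t
      linarith
    · push_neg at H
      obtain ⟨u, hu, hu0⟩ := H
      have hpos : ∀ v ∈ Set.Icc t t₂, 0 ≤ ψ v := by
        intro v hv
        by_contra hvneg
        push_neg at hvneg
        -- then ψ ≤ 0 on [v, T]
        have hψT : ∀ w ∈ Set.Icc v T, ψ w ≤ 0 := by
          intro w hw
          by_contra hwpos
          push_neg at hwpos
          have : 0 < ψ v := hU u v w (hu.2.trans hv.1) hw.1 hw.2 hu0 hwpos
          linarith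
        have hv2T : v ≤ T := hv.2.trans h2T
        have := hanti v T hψT ⟨hv.2, h2T⟩ (Set.right_mem_Icc.2 hv2T) h2T
        -- p₀ T ≤ p₀ t₂, i.e. 0 ≤ p₀ t₂, contradiction
        linarith [this, hP0T]
      have := hmono t t₂ hpos (Set.left_mem_Icc.2 ht₂') (Set.right_mem_Icc.2 ht₂') ht₂'
      linarith
  · intro hTB
    simp only [Set.mem_setOf_eq, Set.mem_Icc] at hTB
    linarith [hTB.2, hP0T]
end
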